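/- Let p⊥, H, γ, a, ξ : ℝ → ℝ with p⊥ and H differentiable, H(s) > 0 and ξ(s) > 0 for all s, and let λ, Λ ∈ ℝ. If p⊥'(s) + λH(s)H'(s) = (2γ(s) − a(s))/ξ(s) and (p⊥(s) + (1/2)λH(s)² − Λ)·H'(s)/H(s) = −2(γ(s) + a(s))/ξ(s) for all s, then ((p⊥ + (1/2)λH² − Λ)·H)'(s) = −3H(s)a(s)/ξ(s) for all s. In particular, if a ≡ 0 then the quantity (p⊥ + (1/2)λH² − Λ)H is constant along the magnetic field lines. -/

import Mathlib

/-- from the field equations (KC.34)–(KC.35) for an EMSF with a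
spacelike CKV, ((p⊥ + (1/2)λH² − Λ)H)' = −3Ha/ξ; in particular if a ≡ 0 the
quantity (p⊥ + (1/2)λH² − Λ)H is constant along the magnetic field lines. -/
theorem stmt_15 (pperp H γ a ξ : ℝ → ℝ)
    (hpd : Differentiable ℝ pperp) (hHd : Differentiable ℝ H)
    (hHpos : ∀ s, 0 < H s) (hξpos : ∀ s, 0 < ξ s) (lam Λ : ℝ)
    (h1 : ∀ s, deriv pperp s + lam * H s * deriv H s = (2 * γ s - a s) / ξ s)
    (h2 : ∀ s, (pperp s + (1/2) * lam * (H s)^2 - Λ) * (deriv H s / H s) =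
      -(2 * (γ s + a s) / ξ s)) :
    (∀ s, deriv (fun t => (pperp t + (1/2) * lam * (H t)^2 - Λ) * H t) s =
      -(3 * H s * a s / ξ s)) ∧
    ((∀ s, a s = 0) → ∀ s t,
      (pperp s + (1/2) * lam * (H s)^2 - Λ) * H s =
        (pperp t + (1/2) * lam * (H t)^2 - Λ) * H t) := by
  have hfd : Differentiable ℝ (fun t => pperp t + (1/2) * lam * (H t)^2 - Λ) := by
    fun_prop
  have key : ∀ s, deriv (fun t => (pperp t + (1/2) * lam * (H t)^2 - Λ) * H t) s =
      -(3 * H s * a s / ξ s) := by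
    intro s
    have hd1 : deriv (fun t => pperp t + (1/2) * lam * (H t)^2 - Λ) s =
        deriv pperp s + lam * H s * deriv H s := by
      have h1' : HasDerivAt pperp (deriv pperp s) s := (hpd s).hasDerivAt
      have h2' : HasDerivAt H (deriv H s) s := (hHd s).hasDerivAt
      have hder : HasDerivAt (fun t => pperp t + (1/2) * lam * (H t)^2 - Λ)
          (deriv pperp s + (1/2) * lam * (↑2 * H s ^ (2-1) * deriv H s)) s :=
        (h1'.add (((h2'.pow 2).const_mul ((1/2) * lam)))).sub_const Λ
      rw [hder.deriv]; norm_num; ring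
    rw [deriv_fun_mul (hfd s) (hHd s), hd1, h1 s]
    have hH := (hHpos s).ne'
    have hξ := (hξpos s).ne'
    have h2s := h2 s
    have h2' : (pperp s + (1/2) * lam * (H s)^2 - Λ) * deriv H s =
        -(2 * (γ s + a s) / ξ s) * H s := by
      field_simp at h2s ⊢
      linear_combination h2s
    rw [h2']
    field_simp
    ring
  refine ⟨key, fun ha s t => ?_⟩
  have hconst : ∀ u, deriv (fun t => (pperp t + (1/2) * lam * (H t)^2 - Λ) * H t) u = 0 := by
    intro u; rw [key u, ha u]; ring
  have := is_const_of_deriv_eq_zero (f := fun t => (pperp t + (1/2) * lam * (H t)^2 - Λ) * H t)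
    (hfd.mul hHd) hconst s t
  simpa using this
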